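/- Jordan block index computation: let V be a finite-dimensional ℤ₂-graded vector space with an odd nilpotent operator D (D swaps V⁺ and V⁻). Define H_top^k(V) := ker D^{2k+1}/(ker D^{2k+1} ∩ im D + ker D^{2k}) and H_top(V) = ⊕_{k≥0} H_top^k(V), with the induced ℤ₂-grading. Then dim H_top(V)⁺ − dim H_top(V)⁻ = dim V⁺ − dim V⁻. -/

import Mathlib

set_option linter.unusedSectionVars false
set_option maxHeartbeats 1000000

open Module LinearMap Submodule

namespace Stmt19Aux

variable {K V : Type*} [Field K] [AddCommGroup V] [Module K V] [FiniteDimensional K V]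
variable {Vp Vm : Submodule K V} (hcompl : IsCompl Vp Vm)

/-- projection onto Vp along Vm -/
noncomputable def projP (hcompl : IsCompl Vp Vm) : V →ₗ[K] V :=
  Vp.subtype ∘ₗ Vp.linearProjOfIsCompl Vm hcompl

lemma projP_mem (x : V) : projP hcompl x ∈ Vp := (Vp.linearProjOfIsCompl Vm hcompl x).2

lemma sub_projP_mem (x : V) : x - projP hcompl x ∈ Vm := by
  have h := Submodule.projection_add_projection_eq_self hcompl x
  have heq : x - projP hcompl x = (Vm.linearProjOfIsCompl Vp hcompl.symm x : V) := by
    rw [projP]; simp only [LinearMap.comp_apply, Submodule.subtype_apply]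
    rw [eq_comm, eq_sub_iff_add_eq, add_comm]; exact h
  rw [heq]; exact (Vm.linearProjOfIsCompl Vp hcompl.symm x).2

lemma projP_apply_left {x : V} (hx : x ∈ Vp) : projP hcompl x = x := by
  exact congrArg (Vp.subtype) (Submodule.projectionOnto_apply_left hcompl ⟨x, hx⟩)

lemma projP_apply_right {x : V} (hx : x ∈ Vm) : projP hcompl x = 0 := by
  exact congrArg (Vp.subtype) (Submodule.projectionOnto_apply_of_mem_right hcompl hx)

/-- a graded submodule -/
def Graded (hcompl : IsCompl Vp Vm) (W : Submodule K V) : Prop :=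
  ∀ x ∈ W, projP hcompl x ∈ W

lemma Graded.inf {W₁ W₂ : Submodule K V} (h₁ : Graded hcompl W₁) (h₂ : Graded hcompl W₂) :
    Graded hcompl (W₁ ⊓ W₂) := fun x hx => ⟨h₁ x hx.1, h₂ x hx.2⟩

lemma inf_Vp_sup {W₁ W₂ : Submodule K V} (h₁ : Graded hcompl W₁) (h₂ : Graded hcompl W₂) :
    (W₁ ⊔ W₂) ⊓ Vp = (W₁ ⊓ Vp) ⊔ (W₂ ⊓ Vp) := by
  apply le_antisymm
  · rintro x ⟨hx, hxp⟩
    obtain ⟨w₁, hw₁, w₂, hw₂, rfl⟩ := Submodule.mem_sup.1 hx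
    have : w₁ + w₂ = projP hcompl w₁ + projP hcompl w₂ := by
      rw [← map_add]; exact (projP_apply_left hcompl hxp).symm
    rw [this]
    exact Submodule.mem_sup.2 ⟨_, ⟨h₁ _ hw₁, projP_mem hcompl w₁⟩, _,
      ⟨h₂ _ hw₂, projP_mem hcompl w₂⟩, rfl⟩
  · exact sup_le (inf_le_inf_right _ le_sup_left) (inf_le_inf_right _ le_sup_right)

lemma inf_Vm_sup {W₁ W₂ : Submodule K V} (h₁ : Graded hcompl W₁) (h₂ : Graded hcompl W₂) :
    (W₁ ⊔ W₂) ⊓ Vm = (W₁ ⊓ Vm) ⊔ (W₂ ⊓ Vm) := by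
  apply le_antisymm
  · rintro x ⟨hx, hxm⟩
    obtain ⟨w₁, hw₁, w₂, hw₂, rfl⟩ := Submodule.mem_sup.1 hx
    have hP : projP hcompl w₁ + projP hcompl w₂ = 0 := by
      rw [← map_add]; exact projP_apply_right hcompl hxm
    have : w₁ + w₂ = (w₁ - projP hcompl w₁) + (w₂ - projP hcompl w₂) := by
      rw [sub_add_sub_comm, hP, sub_zero]
    rw [this]
    exact Submodule.mem_sup.2 ⟨_, ⟨W₁.sub_mem hw₁ (h₁ _ hw₁), sub_projP_mem hcompl w₁⟩, _,
      ⟨W₂.sub_mem hw₂ (h₂ _ hw₂), sub_projP_mem hcompl w₂⟩, rfl⟩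
  · exact sup_le (inf_le_inf_right _ le_sup_left) (inf_le_inf_right _ le_sup_right)

/-- signed dimension -/
noncomputable def sigma (Vp Vm : Submodule K V) (W : Submodule K V) : ℤ :=
  (finrank K (W ⊓ Vp : Submodule K V) : ℤ) - finrank K (W ⊓ Vm : Submodule K V)

lemma sigma_sup {W₁ W₂ : Submodule K V} (h₁ : Graded hcompl W₁) (h₂ : Graded hcompl W₂) :
    sigma Vp Vm (W₁ ⊔ W₂) = sigma Vp Vm W₁ + sigma Vp Vm W₂ - sigma Vp Vm (W₁ ⊓ W₂) := by
  have ep := Submodule.finrank_sup_add_finrank_inf_eq (W₁ ⊓ Vp) (W₂ ⊓ Vp)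
  have em := Submodule.finrank_sup_add_finrank_inf_eq (W₁ ⊓ Vm) (W₂ ⊓ Vm)
  have hip : (W₁ ⊓ Vp) ⊓ (W₂ ⊓ Vp) = (W₁ ⊓ W₂) ⊓ Vp := by
    ext x; simp only [Submodule.mem_inf]; tauto
  have him : (W₁ ⊓ Vm) ⊓ (W₂ ⊓ Vm) = (W₁ ⊓ W₂) ⊓ Vm := by
    ext x; simp only [Submodule.mem_inf]; tauto
  rw [hip] at ep; rw [him] at em
  rw [sigma, sigma, sigma, sigma, inf_Vp_sup hcompl h₁ h₂, inf_Vm_sup hcompl h₁ h₂]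
  omega

/-- rank-nullity for restriction to a submodule -/
lemma finrank_map_add (D : Module.End K V) (S : Submodule K V) :
    finrank K (S.map D : Submodule K V) + finrank K (ker D ⊓ S : Submodule K V)
      = finrank K S := by
  have h := LinearMap.finrank_range_add_finrank_ker (D.domRestrict S)
  rw [LinearMap.range_domRestrict] at h
  rw [← h]
  congr 1
  have hker : LinearMap.ker (D.domRestrict S) = Submodule.comap S.subtype (ker D ⊓ S) := by
    ext x
    simp [LinearMap.mem_ker, LinearMap.domRestrict_apply, x.2]
  rw [hker]
  exact (LinearEquiv.finrank_eq (Submodule.comapSubtypeEquivOfLe inf_le_right)).symm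

end Stmt19Aux

namespace Stmt19Aux

variable {K V : Type*} [Field K] [AddCommGroup V] [Module K V] [FiniteDimensional K V]
variable {Vp Vm : Submodule K V} {D : Module.End K V}

lemma eq_zero_of_mem_both (hcompl : IsCompl Vp Vm) {a : V} (ha : a ∈ Vp) (hb : a ∈ Vm) : a = 0 :=
  Submodule.disjoint_def.1 hcompl.disjoint a ha hb

lemma mapD_Vp (hoddp : Vp.map D ≤ Vm) {x : V} (hx : x ∈ Vp) : D x ∈ Vm := hoddp ⟨x, hx, rfl⟩
lemma mapD_Vm (hoddm : Vm.map D ≤ Vp) {x : V} (hx : x ∈ Vm) : D x ∈ Vp := hoddm ⟨x, hx, rfl⟩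

lemma map_inf_Vm (hcompl : IsCompl Vp Vm) (hoddp : Vp.map D ≤ Vm) (hoddm : Vm.map D ≤ Vp)
    {W : Submodule K V} (h : Graded hcompl W) :
    (W.map D) ⊓ Vm = (W ⊓ Vp).map D := by
  apply le_antisymm
  · rintro x ⟨hx, hxm⟩
    obtain ⟨w, hw, rfl⟩ := hx
    have h1 : D (projP hcompl w) ∈ Vm := mapD_Vp hoddp (projP_mem hcompl w)
    have h2 : D (w - projP hcompl w) ∈ Vp := mapD_Vm hoddm (sub_projP_mem hcompl w)
    have key : D w - D (projP hcompl w) = 0 := by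
      apply eq_zero_of_mem_both hcompl
      · rw [← map_sub]; exact h2
      · exact Vm.sub_mem hxm h1
    have : D w = D (projP hcompl w) := by rw [← sub_eq_zero]; exact key
    rw [this]
    exact ⟨projP hcompl w, ⟨h _ hw, projP_mem hcompl w⟩, rfl⟩
  · rintro x ⟨w, ⟨hw, hwp⟩, rfl⟩
    exact ⟨⟨w, hw, rfl⟩, mapD_Vp hoddp hwp⟩

lemma map_inf_Vp (hcompl : IsCompl Vp Vm) (hoddp : Vp.map D ≤ Vm) (hoddm : Vm.map D ≤ Vp)
    {W : Submodule K V} (h : Graded hcompl W) :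
    (W.map D) ⊓ Vp = (W ⊓ Vm).map D := by
  apply le_antisymm
  · rintro x ⟨hx, hxp⟩
    obtain ⟨w, hw, rfl⟩ := hx
    have h1 : D (projP hcompl w) ∈ Vm := mapD_Vp hoddp (projP_mem hcompl w)
    have h2 : D (w - projP hcompl w) ∈ Vp := mapD_Vm hoddm (sub_projP_mem hcompl w)
    have key : D w - D (w - projP hcompl w) = 0 := by
      apply eq_zero_of_mem_both hcompl.symm
      · rw [← map_sub, sub_sub_cancel]; exact h1
      · exact Vp.sub_mem hxp h2
    have : D w = D (w - projP hcompl w) := by rw [← sub_eq_zero]; exact key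
    rw [this]
    exact ⟨w - projP hcompl w, ⟨W.sub_mem hw (h _ hw), sub_projP_mem hcompl w⟩, rfl⟩
  · rintro x ⟨w, ⟨hw, hwm⟩, rfl⟩
    exact ⟨⟨w, hw, rfl⟩, mapD_Vm hoddm hwm⟩

lemma sigma_mapD (hcompl : IsCompl Vp Vm) (hoddp : Vp.map D ≤ Vm) (hoddm : Vm.map D ≤ Vp)
    {W : Submodule K V} (h : Graded hcompl W) :
    sigma Vp Vm (W.map D) = sigma Vp Vm (ker D ⊓ W) - sigma Vp Vm W := by
  have hp := finrank_map_add D (W ⊓ Vp)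
  have hm := finrank_map_add D (W ⊓ Vm)
  have e1 : ker D ⊓ (W ⊓ Vp) = (ker D ⊓ W) ⊓ Vp := (inf_assoc _ _ _).symm
  have e2 : ker D ⊓ (W ⊓ Vm) = (ker D ⊓ W) ⊓ Vm := (inf_assoc _ _ _).symm
  rw [e1] at hp; rw [e2] at hm
  rw [sigma, sigma, sigma, map_inf_Vp hcompl hoddp hoddm h, map_inf_Vm hcompl hoddp hoddm h]
  omega

lemma pow_parity (hoddp : Vp.map D ≤ Vm) (hoddm : Vm.map D ≤ Vp) (n : ℕ) :
    (Vp.map (D ^ n) ≤ Vp ∧ Vm.map (D ^ n) ≤ Vm) ∨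
    (Vp.map (D ^ n) ≤ Vm ∧ Vm.map (D ^ n) ≤ Vp) := by
  induction n with
  | zero => left; simp [pow_zero, Module.End.one_eq_id, Submodule.map_id]
  | succ n ih =>
    have hstep : ∀ W : Submodule K V, W.map (D ^ (n + 1)) = (W.map (D ^ n)).map D := by
      intro W
      rw [pow_succ']
      rw [Module.End.mul_eq_comp, Submodule.map_comp]
    rcases ih with ⟨h1, h2⟩ | ⟨h1, h2⟩
    · right
      exact ⟨by rw [hstep]; exact le_trans (Submodule.map_mono h1) hoddp,
             by rw [hstep]; exact le_trans (Submodule.map_mono h2) hoddm⟩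
    · left
      exact ⟨by rw [hstep]; exact le_trans (Submodule.map_mono h1) hoddm,
             by rw [hstep]; exact le_trans (Submodule.map_mono h2) hoddp⟩

lemma graded_ker_pow (hcompl : IsCompl Vp Vm) (hoddp : Vp.map D ≤ Vm) (hoddm : Vm.map D ≤ Vp) (n : ℕ) : Graded hcompl (ker (D ^ n)) := by
  intro x hx
  rw [LinearMap.mem_ker] at hx ⊢
  have hsum : (D ^ n) (projP hcompl x) + (D ^ n) (x - projP hcompl x) = 0 := by
    rw [← map_add, add_sub_cancel]; exact hx
  have hP : (D ^ n) (projP hcompl x) = -( (D ^ n) (x - projP hcompl x)) :=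
    eq_neg_of_add_eq_zero_left hsum
  rcases pow_parity hoddp hoddm n with ⟨h1, h2⟩ | ⟨h1, h2⟩
  · apply eq_zero_of_mem_both hcompl
    · exact h1 ⟨_, projP_mem hcompl x, rfl⟩
    · rw [hP]; exact Vm.neg_mem (h2 ⟨_, sub_projP_mem hcompl x, rfl⟩)
  · apply eq_zero_of_mem_both hcompl.symm
    · exact h1 ⟨_, projP_mem hcompl x, rfl⟩
    · rw [hP]; exact Vp.neg_mem (h2 ⟨_, sub_projP_mem hcompl x, rfl⟩)

lemma graded_range (hcompl : IsCompl Vp Vm) (hoddp : Vp.map D ≤ Vm) (hoddm : Vm.map D ≤ Vp) : Graded hcompl (range D) := by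
  rintro x ⟨v, rfl⟩
  have hsplit : D v = D (projP hcompl v) + D (v - projP hcompl v) := by
    rw [← map_add, add_sub_cancel]
  have : projP hcompl (D v) = D (v - projP hcompl v) := by
    rw [hsplit, map_add, projP_apply_right hcompl (mapD_Vp hoddp (projP_mem hcompl v)),
      projP_apply_left hcompl (mapD_Vm hoddm (sub_projP_mem hcompl v)), zero_add]
  rw [this]
  exact ⟨_, rfl⟩

lemma map_ker_pow_succ (n : ℕ) : (ker (D ^ (n + 1))).map D = ker (D ^ n) ⊓ range D := by
  ext x
  constructor
  · rintro ⟨w, hw, rfl⟩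
    refine ⟨?_, ⟨w, rfl⟩⟩
    simp only [SetLike.mem_coe, LinearMap.mem_ker] at hw ⊢
    rw [← hw, pow_succ, Module.End.mul_apply]
  · rintro ⟨hx, w, rfl⟩
    refine ⟨w, ?_, rfl⟩
    simp only [SetLike.mem_coe, LinearMap.mem_ker] at hx ⊢
    rw [pow_succ, Module.End.mul_apply]; exact hx

lemma ker_pow_mono {n m : ℕ} (h : n ≤ m) : ker (D ^ n) ≤ ker (D ^ m) := by
  intro x hx
  rw [LinearMap.mem_ker] at hx ⊢
  have : D ^ m = D ^ (m - n) * D ^ n := by rw [← pow_add]; congr 1; omega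
  rw [this, Module.End.mul_apply, hx, map_zero]

lemma ker_pow_eq_top {N n : ℕ} (hN : D ^ N = 0) (h : N ≤ n) : ker (D ^ n) = ⊤ := by
  have : D ^ n = D ^ (n - N) * D ^ N := by rw [← pow_add]; congr 1; omega
  rw [this, hN, mul_zero, LinearMap.ker_zero]

end Stmt19Aux

/-- Jordan block index computation: let `V = V⁺ ⊕ V⁻` be a
finite-dimensional ℤ₂-graded vector space and `D` an odd nilpotent operator.  With
`H_top^k(V) = ker D^{2k+1}/(ker D^{2k+1} ∩ im D + ker D^{2k})` and the induced grading,
the Euler characteristic of the higher Dirac cohomology equals that of `V`: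
`dim H_top(V)⁺ − dim H_top(V)⁻ = dim V⁺ − dim V⁻`.  (Dimensions of the graded pieces of
the subquotients are expressed as differences of dimensions of graded submodules.) -/
theorem stmt19 {K V : Type*} [Field K] [AddCommGroup V] [Module K V]
    [FiniteDimensional K V]
    (Vp Vm : Submodule K V) (hcompl : IsCompl Vp Vm)
    (D : Module.End K V) (hnil : IsNilpotent D)
    (hoddp : Vp.map D ≤ Vm) (hoddm : Vm.map D ≤ Vp) :
    ∑ᶠ k : ℕ,
      (((Module.finrank K (LinearMap.ker (D ^ (2 * k + 1)) ⊓ Vp :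
            Submodule K V) : ℤ)
        - Module.finrank K (((LinearMap.ker (D ^ (2 * k + 1)) ⊓ LinearMap.range D
            ⊔ LinearMap.ker (D ^ (2 * k))) ⊓ Vp : Submodule K V)))
       - ((Module.finrank K (LinearMap.ker (D ^ (2 * k + 1)) ⊓ Vm :
            Submodule K V) : ℤ)
        - Module.finrank K (((LinearMap.ker (D ^ (2 * k + 1)) ⊓ LinearMap.range D
            ⊔ LinearMap.ker (D ^ (2 * k))) ⊓ Vm : Submodule K V))))
      = (Module.finrank K Vp : ℤ) - Module.finrank K Vm := by
  classical
  obtain ⟨N, hN⟩ := hnil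
  set s : ℕ → ℤ := fun n => Stmt19Aux.sigma Vp Vm (LinearMap.ker (D ^ n)) with hs
  set f : ℕ → ℤ := fun k =>
      (((Module.finrank K (LinearMap.ker (D ^ (2 * k + 1)) ⊓ Vp : Submodule K V) : ℤ)
        - Module.finrank K (((LinearMap.ker (D ^ (2 * k + 1)) ⊓ LinearMap.range D
            ⊔ LinearMap.ker (D ^ (2 * k))) ⊓ Vp : Submodule K V)))
       - ((Module.finrank K (LinearMap.ker (D ^ (2 * k + 1)) ⊓ Vm : Submodule K V) : ℤ)
        - Module.finrank K (((LinearMap.ker (D ^ (2 * k + 1)) ⊓ LinearMap.range D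
            ⊔ LinearMap.ker (D ^ (2 * k))) ⊓ Vm : Submodule K V)))) with hf
  have hsig : ∀ k : ℕ, f k = Stmt19Aux.sigma Vp Vm (LinearMap.ker (D ^ (2 * k + 1)))
      - Stmt19Aux.sigma Vp Vm ((LinearMap.ker (D ^ (2 * k + 1)) ⊓ LinearMap.range D
          ⊔ LinearMap.ker (D ^ (2 * k)))) := by
    intro k
    simp only [hf, Stmt19Aux.sigma]
    ring
  have key : ∀ k : ℕ, f k = s (2 * (k + 1)) - s (2 * k) := by
    intro k
    have gk1 : Stmt19Aux.Graded hcompl (LinearMap.ker (D ^ (2 * k + 1))) :=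
      Stmt19Aux.graded_ker_pow hcompl hoddp hoddm _
    have gk0 : Stmt19Aux.Graded hcompl (LinearMap.ker (D ^ (2 * k))) :=
      Stmt19Aux.graded_ker_pow hcompl hoddp hoddm _
    have gR : Stmt19Aux.Graded hcompl (LinearMap.range D) :=
      Stmt19Aux.graded_range hcompl hoddp hoddm
    have hmono : LinearMap.ker (D ^ (2 * k)) ≤ LinearMap.ker (D ^ (2 * k + 1)) :=
      Stmt19Aux.ker_pow_mono (by omega)
    have hB := Stmt19Aux.sigma_sup hcompl (gk1.inf hcompl gR) gk0
    have hinf : (LinearMap.ker (D ^ (2 * k + 1)) ⊓ LinearMap.range D)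
        ⊓ LinearMap.ker (D ^ (2 * k))
        = LinearMap.ker (D ^ (2 * k)) ⊓ LinearMap.range D := by
      ext x
      simp only [Submodule.mem_inf]
      exact ⟨fun h => ⟨h.2, h.1.2⟩, fun h => ⟨⟨hmono h.1, h.2⟩, h.1⟩⟩
    have hm1 : (LinearMap.ker (D ^ (2 * k + 1 + 1))).map D
        = LinearMap.ker (D ^ (2 * k + 1)) ⊓ LinearMap.range D :=
      Stmt19Aux.map_ker_pow_succ _
    have hm0 : (LinearMap.ker (D ^ (2 * k + 1))).map D
        = LinearMap.ker (D ^ (2 * k)) ⊓ LinearMap.range D := by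
      have := Stmt19Aux.map_ker_pow_succ (D := D) (2 * k)
      convert this using 3
    have hk1 : LinearMap.ker D ⊓ LinearMap.ker (D ^ (2 * k + 1 + 1)) = LinearMap.ker D := by
      rw [inf_eq_left]
      intro x hx
      have : x ∈ LinearMap.ker (D ^ 1) := by rwa [pow_one]
      exact Stmt19Aux.ker_pow_mono (by omega) this
    have hk0 : LinearMap.ker D ⊓ LinearMap.ker (D ^ (2 * k + 1)) = LinearMap.ker D := by
      rw [inf_eq_left]
      intro x hx
      have : x ∈ LinearMap.ker (D ^ 1) := by rwa [pow_one]
      exact Stmt19Aux.ker_pow_mono (by omega) this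
    have e1 : Stmt19Aux.sigma Vp Vm (LinearMap.ker (D ^ (2 * k + 1)) ⊓ LinearMap.range D)
        = Stmt19Aux.sigma Vp Vm (LinearMap.ker D) - s (2 * (k + 1)) := by
      rw [← hm1, Stmt19Aux.sigma_mapD hcompl hoddp hoddm
        (Stmt19Aux.graded_ker_pow hcompl hoddp hoddm _), hk1, hs]
      have : 2 * (k + 1) = 2 * k + 1 + 1 := by omega
      rw [this]
    have e0 : Stmt19Aux.sigma Vp Vm (LinearMap.ker (D ^ (2 * k)) ⊓ LinearMap.range D)
        = Stmt19Aux.sigma Vp Vm (LinearMap.ker D) - s (2 * k + 1) := by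
      rw [← hm0, Stmt19Aux.sigma_mapD hcompl hoddp hoddm
        (Stmt19Aux.graded_ker_pow hcompl hoddp hoddm _), hk0, hs]
    rw [hsig k]
    rw [hB, hinf, e1, e0]
    have hsk : s (2 * k) = Stmt19Aux.sigma Vp Vm (LinearMap.ker (D ^ (2 * k))) := rfl
    have hsk1 : s (2 * k + 1) = Stmt19Aux.sigma Vp Vm (LinearMap.ker (D ^ (2 * k + 1))) := rfl
    rw [hsk, hsk1]
    ring
  have hsupp : Function.support f ⊆ (Finset.range (N + 1) : Set ℕ) := by
    intro k hk
    simp only [Finset.coe_range, Set.mem_Iio]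
    by_contra hlt
    push_neg at hlt
    apply hk
    have h1 : LinearMap.ker (D ^ (2 * (k + 1))) = ⊤ :=
      Stmt19Aux.ker_pow_eq_top hN (by omega)
    have h2 : LinearMap.ker (D ^ (2 * k)) = ⊤ :=
      Stmt19Aux.ker_pow_eq_top hN (by omega)
    rw [key k, hs]
    simp only [h1, h2, sub_self]
  rw [finsum_eq_sum_of_support_subset f hsupp]
  have htel : ∑ k ∈ Finset.range (N + 1), f k
      = (fun k => s (2 * k)) (N + 1) - (fun k => s (2 * k)) 0 := by
    rw [← Finset.sum_range_sub (fun k => s (2 * k)) (N + 1)]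
    exact Finset.sum_congr rfl fun k _ => key k
  rw [htel]
  have hN2 : s (2 * (N + 1)) = (Module.finrank K Vp : ℤ) - Module.finrank K Vm := by
    have h1 : LinearMap.ker (D ^ (2 * (N + 1))) = ⊤ :=
      Stmt19Aux.ker_pow_eq_top hN (by omega)
    show Stmt19Aux.sigma Vp Vm (LinearMap.ker (D ^ (2 * (N + 1)))) = _
    rw [h1]
    rw [Stmt19Aux.sigma, top_inf_eq, top_inf_eq]
  have h0 : s (2 * 0) = 0 := by
    have : LinearMap.ker (D ^ (2 * 0)) = ⊥ := by
      rw [pow_zero]; exact LinearMap.ker_id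
    show Stmt19Aux.sigma Vp Vm (LinearMap.ker (D ^ (2 * 0))) = 0
    rw [this]
    rw [Stmt19Aux.sigma, bot_inf_eq, bot_inf_eq]
    simp
  simp only at hN2 h0 ⊢
  rw [hN2, h0, sub_zero]
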